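/- In a finite MDP, if every state s with μ₀(s) > 0 can reach every other state under some policy (in the sense that there exists d satisfying the Bellman flow constraint with d(s) > 0 for all s), then Slater's condition holds for the constrained problem max_{d ≥ 0, Bellman flow} ∑ d·r̂ − α D_f(d‖d^D), and strong duality holds: the optimal value equals min_V max_{d ≥ 0} of the Lagrangian. -/

import Mathlib

open scoped BigOperators

section Aux

variable {S A : Type*} [Fintype S] [Fintype A]

/-- objective -/
noncomputable def Jf (α : ℝ) (f : ℝ → ℝ) (dD rhat : S → A → ℝ) (d : S → A → ℝ) : ℝ :=
  ∑ s, ∑ a, d s a * rhat s a - α * ∑ s, ∑ a, dD s a * f (d s a / dD s a)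

/-- constraint residual -/
noncomputable def resf (γ : ℝ) (μ0 : S → ℝ) (T : S → A → S → ℝ) (d : S → A → ℝ) (s : S) : ℝ :=
  (1 - γ) * μ0 s + γ * ∑ sb, ∑ ab, T sb ab s * d sb ab - ∑ a, d s a

/-- feasible set -/
def feas (γ : ℝ) (μ0 : S → ℝ) (T : S → A → S → ℝ) : Set (S → A → ℝ) :=
  {d | (∀ s a, 0 ≤ d s a) ∧ ∀ s, ∑ a, d s a =
    (1 - γ) * μ0 s + γ * ∑ sb, ∑ ab, T sb ab s * d sb ab}

/-- epigraph-type set for separation -/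
def Cset (γ α : ℝ) (f : ℝ → ℝ) (μ0 : S → ℝ) (T : S → A → S → ℝ) (dD rhat : S → A → ℝ) :
    Set ((S → ℝ) × ℝ) :=
  {p | ∃ d : S → A → ℝ, (∀ s a, 0 ≤ d s a) ∧ p.1 = resf γ μ0 T d ∧ p.2 ≤ Jf α f dD rhat d}

lemma convex_chord {f : ℝ → ℝ} (hf : ConvexOn ℝ (Set.Ici 0) f) {M x : ℝ}
    (h0 : 0 ≤ x) (hxM : x ≤ M) : f x ≤ max (f 0) (f M) := by
  rcases eq_or_lt_of_le (h0.trans hxM) with h | hM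
  · have hx0 : x = 0 := le_antisymm (hxM.trans h.symm.le) h0
    subst hx0; exact le_max_left _ _
  · have ha : (0:ℝ) ≤ (M - x) / M := div_nonneg (by linarith) hM.le
    have hb : (0:ℝ) ≤ x / M := div_nonneg h0 hM.le
    have hab : (M - x) / M + x / M = 1 := by field_simp; ring
    have key := hf.2 (Set.mem_Ici.2 le_rfl) (Set.mem_Ici.2 (h0.trans hxM)) ha hb hab
    simp only [smul_eq_mul, mul_zero, zero_add] at key
    have hx : x / M * M = x := by field_simp
    rw [hx] at key
    refine key.trans ?_
    have h1 : f 0 ≤ max (f 0) (f M) := le_max_left _ _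
    have h2 : f M ≤ max (f 0) (f M) := le_max_right _ _
    have h3 : (M - x) / M * (f 0 ⊔ f M) + x / M * (f 0 ⊔ f M) = f 0 ⊔ f M := by
      linear_combination (f 0 ⊔ f M) * hab
    nlinarith [mul_le_mul_of_nonneg_left h1 ha, mul_le_mul_of_nonneg_left h2 hb]

lemma convex_lb {f : ℝ → ℝ} (hf : ConvexOn ℝ (Set.Ici 0) f) {M x : ℝ}
    (h0 : 0 ≤ x) (hxM : x ≤ M) : 2 * f (M / 2) - max (f 0) (f M) ≤ f x := by
  have hMx : (0:ℝ) ≤ M - x := by linarith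
  have key := hf.2 (Set.mem_Ici.2 h0) (Set.mem_Ici.2 hMx)
    (show (0:ℝ) ≤ 1/2 by norm_num) (show (0:ℝ) ≤ 1/2 by norm_num)
    (show (1:ℝ)/2 + 1/2 = 1 by norm_num)
  simp only [smul_eq_mul] at key
  have harg : (1:ℝ)/2 * x + 1/2 * (M - x) = M / 2 := by ring
  rw [harg] at key
  have hch : f (M - x) ≤ max (f 0) (f M) := convex_chord hf hMx (by linarith)
  linarith

lemma ereal_sSup_coe {s : Set ℝ} (hne : s.Nonempty) (hb : BddAbove s) :
    sSup (Real.toEReal '' s) = ((sSup s : ℝ) : EReal) :=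
  (Monotone.map_csSup_of_continuousAt (continuous_coe_real_ereal.continuousAt)
    (fun _ _ h => EReal.coe_le_coe_iff.2 h) hne hb).symm

lemma univ_sum_smul_single [DecidableEq S] (b : S → ℝ) :
    ∑ s, b s • (Pi.single s 1 : S → ℝ) = b := by
  have h : ∀ s, b s • (Pi.single s 1 : S → ℝ) = Pi.single s (b s) := by
    intro s; funext t; by_cases h : t = s <;> simp [Pi.single_apply, Pi.smul_apply, smul_eq_mul, h]
  rw [Finset.sum_congr rfl fun s _ => h s, Finset.univ_sum_single]

lemma feas_sum_one {γ : ℝ} {μ0 : S → ℝ} {T : S → A → S → ℝ}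
    (hγ1 : γ < 1) (hμ0sum : ∑ s, μ0 s = 1) (hTsum : ∀ s a, ∑ s', T s a s' = 1)
    {d : S → A → ℝ} (hd : d ∈ feas γ μ0 T) : ∑ s, ∑ a, d s a = 1 := by
  have h1 : ∑ s, ∑ a, d s a
      = (1 - γ) * ∑ s, μ0 s + γ * ∑ s, ∑ sb, ∑ ab, T sb ab s * d sb ab := by
    calc ∑ s, ∑ a, d s a
        = ∑ s, ((1 - γ) * μ0 s + γ * ∑ sb, ∑ ab, T sb ab s * d sb ab) :=
          Finset.sum_congr rfl fun s _ => hd.2 s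
      _ = _ := by rw [Finset.sum_add_distrib, Finset.mul_sum, Finset.mul_sum]
  have h2 : ∑ s, ∑ sb, ∑ ab, T sb ab s * d sb ab = ∑ sb, ∑ ab, d sb ab := by
    rw [Finset.sum_comm]
    refine Finset.sum_congr rfl fun sb _ => ?_
    rw [Finset.sum_comm]
    refine Finset.sum_congr rfl fun ab _ => ?_
    rw [← Finset.sum_mul, hTsum sb ab, one_mul]
  rw [h2, hμ0sum] at h1
  have hne : (1:ℝ) - γ ≠ 0 := sub_ne_zero.2 (by linarith)
  have h3 : (1 - γ) * (∑ s, ∑ a, d s a) = (1 - γ) * 1 := by linear_combination h1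
  exact mul_left_cancel₀ hne h3

lemma feas_le_one {γ : ℝ} {μ0 : S → ℝ} {T : S → A → S → ℝ}
    (hγ1 : γ < 1) (hμ0sum : ∑ s, μ0 s = 1) (hTsum : ∀ s a, ∑ s', T s a s' = 1)
    {d : S → A → ℝ} (hd : d ∈ feas γ μ0 T) (s : S) (a : A) : d s a ≤ 1 := by
  have h1 : d s a ≤ ∑ a', d s a' :=
    Finset.single_le_sum (fun a' _ => hd.1 s a') (Finset.mem_univ a)
  have h2 : ∑ a', d s a' ≤ ∑ s', ∑ a', d s' a' :=
    Finset.single_le_sum (f := fun s' => ∑ a', d s' a')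
      (fun s' _ => Finset.sum_nonneg fun a' _ => hd.1 s' a') (Finset.mem_univ s)
  rw [feas_sum_one hγ1 hμ0sum hTsum hd] at h2
  linarith

lemma Jf_bddAbove {γ α : ℝ} {f : ℝ → ℝ} {μ0 : S → ℝ} {T : S → A → S → ℝ}
    {dD rhat : S → A → ℝ}
    (hγ1 : γ < 1) (hα : 0 < α) (hμ0sum : ∑ s, μ0 s = 1)
    (hTsum : ∀ s a, ∑ s', T s a s' = 1)
    (hf : ConvexOn ℝ (Set.Ici 0) f) (hdD : ∀ s a, 0 < dD s a) :
    BddAbove (Jf α f dD rhat '' feas γ μ0 T) := by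
  refine ⟨∑ s, ∑ a, |rhat s a| - α * ∑ s, ∑ a, dD s a *
    (2 * f (1 / dD s a / 2) - max (f 0) (f (1 / dD s a))), ?_⟩
  rintro x ⟨d, hd, rfl⟩
  have hd1 : ∀ s a, d s a ≤ 1 := feas_le_one hγ1 hμ0sum hTsum hd
  have hA : ∑ s, ∑ a, d s a * rhat s a ≤ ∑ s, ∑ a, |rhat s a| := by
    refine Finset.sum_le_sum fun s _ => Finset.sum_le_sum fun a _ => ?_
    calc d s a * rhat s a ≤ d s a * |rhat s a| :=
          mul_le_mul_of_nonneg_left (le_abs_self _) (hd.1 s a)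
      _ ≤ 1 * |rhat s a| := mul_le_mul_of_nonneg_right (hd1 s a) (abs_nonneg _)
      _ = |rhat s a| := one_mul _
  have hB : ∑ s, ∑ a, dD s a * (2 * f (1 / dD s a / 2) - max (f 0) (f (1 / dD s a)))
      ≤ ∑ s, ∑ a, dD s a * f (d s a / dD s a) := by
    refine Finset.sum_le_sum fun s _ => Finset.sum_le_sum fun a _ => ?_
    refine mul_le_mul_of_nonneg_left ?_ (hdD s a).le
    exact convex_lb hf (div_nonneg (hd.1 s a) (hdD s a).le)
      (by rw [div_le_div_iff₀ (hdD s a) (hdD s a)]; nlinarith [hdD s a, hd1 s a])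
  have := mul_le_mul_of_nonneg_left hB hα.le
  unfold Jf
  linarith

end Aux
section Conv
variable {S A : Type*} [Fintype S] [Fintype A]

lemma Cset_convex {γ α : ℝ} {f : ℝ → ℝ} {μ0 : S → ℝ} {T : S → A → S → ℝ}
    {dD rhat : S → A → ℝ}
    (hα : 0 < α) (hf : ConvexOn ℝ (Set.Ici 0) f) (hdD : ∀ s a, 0 < dD s a) :
    Convex ℝ (Cset γ α f μ0 T dD rhat) := by
  rintro ⟨b₁, u₁⟩ ⟨d₁, hn₁, hb₁, hu₁⟩ ⟨b₂, u₂⟩ ⟨d₂, hn₂, hb₂, hu₂⟩ p q hp hq hpq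
  simp only at hb₁ hb₂ hu₁ hu₂
  refine ⟨fun s a => p * d₁ s a + q * d₂ s a,
    fun s a => add_nonneg (mul_nonneg hp (hn₁ s a)) (mul_nonneg hq (hn₂ s a)), ?_, ?_⟩
  · show p • b₁ + q • b₂ = _
    subst hb₁; subst hb₂
    funext s
    simp only [Pi.add_apply, Pi.smul_apply, smul_eq_mul]
    unfold resf
    have e1 : ∑ a, (p * d₁ s a + q * d₂ s a) = p * ∑ a, d₁ s a + q * ∑ a, d₂ s a := by
      rw [Finset.sum_add_distrib, Finset.mul_sum, Finset.mul_sum]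
    have e2 : ∑ sb, ∑ ab, T sb ab s * (p * d₁ sb ab + q * d₂ sb ab)
        = p * (∑ sb, ∑ ab, T sb ab s * d₁ sb ab)
          + q * (∑ sb, ∑ ab, T sb ab s * d₂ sb ab) := by
      rw [Finset.mul_sum, Finset.mul_sum, ← Finset.sum_add_distrib]
      refine Finset.sum_congr rfl fun sb _ => ?_
      rw [Finset.mul_sum, Finset.mul_sum, ← Finset.sum_add_distrib]
      exact Finset.sum_congr rfl fun ab _ => by ring
    rw [e1, e2]
    linear_combination ((1 - γ) * μ0 s) * hpq
  · show p • u₁ + q • u₂ ≤ _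
    simp only [smul_eq_mul]
    have h1 : p * u₁ + q * u₂ ≤ p * Jf α f dD rhat d₁ + q * Jf α f dD rhat d₂ :=
      add_le_add (mul_le_mul_of_nonneg_left hu₁ hp) (mul_le_mul_of_nonneg_left hu₂ hq)
    refine h1.trans ?_
    have lin : ∑ s, ∑ a, (p * d₁ s a + q * d₂ s a) * rhat s a
        = p * ∑ s, ∑ a, d₁ s a * rhat s a + q * ∑ s, ∑ a, d₂ s a * rhat s a := by
      rw [Finset.mul_sum, Finset.mul_sum, ← Finset.sum_add_distrib]
      refine Finset.sum_congr rfl fun s _ => ?_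
      rw [Finset.mul_sum, Finset.mul_sum, ← Finset.sum_add_distrib]
      exact Finset.sum_congr rfl fun a _ => by ring
    have conv : ∑ s, ∑ a, dD s a * f ((p * d₁ s a + q * d₂ s a) / dD s a)
        ≤ p * ∑ s, ∑ a, dD s a * f (d₁ s a / dD s a)
          + q * ∑ s, ∑ a, dD s a * f (d₂ s a / dD s a) := by
      rw [Finset.mul_sum, Finset.mul_sum, ← Finset.sum_add_distrib]
      refine Finset.sum_le_sum fun s _ => ?_
      rw [Finset.mul_sum, Finset.mul_sum, ← Finset.sum_add_distrib]
      refine Finset.sum_le_sum fun a _ => ?_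
      have harg : (p * d₁ s a + q * d₂ s a) / dD s a
          = p * (d₁ s a / dD s a) + q * (d₂ s a / dD s a) := by
        field_simp
      have hkey := hf.2 (Set.mem_Ici.2 (div_nonneg (hn₁ s a) (hdD s a).le))
        (Set.mem_Ici.2 (div_nonneg (hn₂ s a) (hdD s a).le)) hp hq hpq
      simp only [smul_eq_mul] at hkey
      calc dD s a * f ((p * d₁ s a + q * d₂ s a) / dD s a)
          = dD s a * f (p * (d₁ s a / dD s a) + q * (d₂ s a / dD s a)) := by rw [harg]
        _ ≤ dD s a * (p * f (d₁ s a / dD s a) + q * f (d₂ s a / dD s a)) :=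
            mul_le_mul_of_nonneg_left hkey (hdD s a).le
        _ = p * (dD s a * f (d₁ s a / dD s a)) + q * (dD s a * f (d₂ s a / dD s a)) := by
            ring
    have hconv' := mul_le_mul_of_nonneg_left conv hα.le
    simp only [Jf]
    rw [lin]
    linarith [hconv']
end Conv
section Interior
variable {S A : Type*} [Fintype S] [Fintype A]

open Filter Topology

set_option maxHeartbeats 1000000 in
lemma Cset_interior_point [DecidableEq S] [DecidableEq A]
    {γ α : ℝ} {f : ℝ → ℝ} {μ0 : S → ℝ} {T : S → A → S → ℝ} {dD rhat : S → A → ℝ}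
    (hγ : γ ∈ Set.Ioo (0:ℝ) 1)
    (hT : ∀ s a s', 0 ≤ T s a s') (hTsum : ∀ s a, ∑ s', T s a s' = 1)
    (hf : ConvexOn ℝ (Set.Ici 0) f) (hdD : ∀ s a, 0 < dD s a)
    {d₀ : S → A → ℝ} (hd₀ : d₀ ∈ feas γ μ0 T) (hd₀p : ∀ s, 0 < ∑ a, d₀ s a) :
    ((0 : S → ℝ), Jf α f dD rhat d₀ - 2) ∈ interior (Cset γ α f μ0 T dD rhat) := by
  -- choose positive actions
  have hex : ∀ s, ∃ a, 0 < d₀ s a := by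
    intro s
    by_contra h
    push_neg at h
    exact absurd (hd₀p s) (not_lt.2 (Finset.sum_nonpos fun a _ => h a))
  choose a0 ha0 using hex
  -- perturbed occupancy
  set pd : (S → ℝ) → S → A → ℝ :=
    fun x s a => d₀ s a + if a = a0 s then x s else 0 with hpd
  -- transition matrix
  set Amat : Matrix S S ℝ :=
    Matrix.of (fun s s' => γ * T s' (a0 s') s - (if s' = s then 1 else 0)) with hAmat
  have hmul : ∀ (x : S → ℝ) (s : S),
      Amat.mulVecLin x s = γ * ∑ s', T s' (a0 s') s * x s' - x s := by
    intro x s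
    have : Amat.mulVecLin x s = ∑ s', Amat s s' * x s' := by
      simp [Matrix.mulVecLin_apply, Matrix.mulVec, dotProduct]
    rw [this]
    calc ∑ s', Amat s s' * x s'
        = ∑ s', (γ * (T s' (a0 s') s * x s') - (if s' = s then x s' else 0)) := by
          refine Finset.sum_congr rfl fun s' _ => ?_
          by_cases h : s' = s <;> simp [hAmat, h] <;> ring
      _ = γ * ∑ s', T s' (a0 s') s * x s' - x s := by
          rw [Finset.sum_sub_distrib, ← Finset.mul_sum,
            Finset.sum_ite_eq' Finset.univ s (fun s' => x s')]
          simp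
  have hres_pd : ∀ x : S → ℝ, resf γ μ0 T (pd x) = Amat.mulVecLin x := by
    intro x; funext s
    have h1 : ∑ a, pd x s a = ∑ a, d₀ s a + x s := by
      simp only [hpd]
      rw [Finset.sum_add_distrib, Finset.sum_ite_eq' Finset.univ (a0 s) (fun _ => x s)]
      simp
    have h2 : ∑ sb, ∑ ab, T sb ab s * pd x sb ab
        = ∑ sb, ∑ ab, T sb ab s * d₀ sb ab + ∑ sb, T sb (a0 sb) s * x sb := by
      simp only [hpd]
      rw [← Finset.sum_add_distrib]
      refine Finset.sum_congr rfl fun sb _ => ?_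
      calc ∑ ab, T sb ab s * (d₀ sb ab + if ab = a0 sb then x sb else 0)
          = ∑ ab, (T sb ab s * d₀ sb ab + if ab = a0 sb then T sb ab s * x sb else 0) := by
            refine Finset.sum_congr rfl fun ab _ => ?_
            by_cases h : ab = a0 sb <;> simp [h] <;> ring
        _ = ∑ ab, T sb ab s * d₀ sb ab + T sb (a0 sb) s * x sb := by
            rw [Finset.sum_add_distrib,
              Finset.sum_ite_eq' Finset.univ (a0 sb) (fun ab => T sb ab s * x sb)]
            simp
    have h0 : (1 - γ) * μ0 s + γ * ∑ sb, ∑ ab, T sb ab s * d₀ sb ab - ∑ a, d₀ s a = 0 :=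
      sub_eq_zero.2 (hd₀.2 s).symm
    rw [hmul x s]
    unfold resf
    rw [h1, h2]
    linear_combination h0
  -- injectivity
  have hinj : Function.Injective (Matrix.mulVecLin Amat) := by
    rw [injective_iff_map_eq_zero]
    intro x hx
    have hfix : ∀ s, x s = γ * ∑ s', T s' (a0 s') s * x s' := by
      intro s
      have h := congrFun hx s
      rw [hmul x s] at h
      simp only [Pi.zero_apply] at h
      linarith
    have hsum : ∑ s, |x s| ≤ γ * ∑ s, |x s| := by
      calc ∑ s, |x s| = ∑ s, |γ * ∑ s', T s' (a0 s') s * x s'| :=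
            Finset.sum_congr rfl fun s _ => by rw [← hfix s]
        _ ≤ ∑ s, γ * ∑ s', T s' (a0 s') s * |x s'| := by
            refine Finset.sum_le_sum fun s _ => ?_
            rw [abs_mul, abs_of_pos hγ.1]
            refine mul_le_mul_of_nonneg_left ?_ hγ.1.le
            refine (Finset.abs_sum_le_sum_abs _ _).trans ?_
            refine Finset.sum_le_sum fun s' _ => ?_
            rw [abs_mul, abs_of_nonneg (hT s' (a0 s') s)]
        _ = γ * ∑ s', |x s'| := by
            rw [← Finset.mul_sum]
            congr 1
            rw [Finset.sum_comm]
            refine Finset.sum_congr rfl fun s' _ => ?_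
            rw [← Finset.sum_mul, hTsum s' (a0 s'), one_mul]
    have hnn : (0:ℝ) ≤ ∑ s, |x s| := Finset.sum_nonneg fun s _ => abs_nonneg _
    have hz : ∑ s, |x s| = 0 := by nlinarith [hγ.2]
    funext s
    have h1 : |x s| ≤ ∑ s', |x s'| :=
      Finset.single_le_sum (fun s' _ => abs_nonneg (x s')) (Finset.mem_univ s)
    have : |x s| = 0 := le_antisymm (by rw [hz] at h1; exact h1) (abs_nonneg _)
    simpa using abs_eq_zero.1 this
  have hsurj := LinearMap.injective_iff_surjective.1 hinj
  set e := LinearEquiv.ofBijective (Matrix.mulVecLin Amat) ⟨hinj, hsurj⟩ with he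
  have hecont : Continuous fun b : S → ℝ => (e.symm b : S → ℝ) :=
    LinearMap.continuous_of_finiteDimensional (e.symm : (S → ℝ) →ₗ[ℝ] (S → ℝ))
  have hesymm : ∀ b, Amat.mulVecLin (e.symm b) = b := fun b => e.apply_symm_apply b
  -- continuity of the perturbed objective
  have hfc : ∀ y : ℝ, 0 < y → ContinuousAt f y := fun y hy =>
    ((hf.subset Set.Ioi_subset_Ici_self (convex_Ioi 0)).continuousOn isOpen_Ioi).continuousAt
      (isOpen_Ioi.mem_nhds hy)
  have hGc : ContinuousAt (fun x : S → ℝ => Jf α f dD rhat (pd x)) 0 := by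
    unfold Jf
    apply ContinuousAt.sub
    · refine Continuous.continuousAt ?_
      refine continuous_finset_sum _ fun s _ => continuous_finset_sum _ fun a _ => ?_
      simp only [hpd]
      by_cases h : a = a0 s
      · simp only [if_pos h]
        exact (continuous_const.add (continuous_apply s)).mul continuous_const
      · simp only [if_neg h, add_zero]
        exact continuous_const
    · refine ContinuousAt.mul continuousAt_const ?_
      have hterm : ∀ s a, ContinuousAt (fun x : S → ℝ => dD s a * f (pd x s a / dD s a)) 0 := by
        intro s a
        simp only [hpd]
        by_cases h : a = a0 s
        · simp only [if_pos h]
          have hinner : ContinuousAt (fun x : S → ℝ => (d₀ s a + x s) / dD s a) 0 :=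
            ((continuous_const.add (continuous_apply s)).div_const _).continuousAt
          have houter : ContinuousAt f ((fun x : S → ℝ => (d₀ s a + x s) / dD s a) 0) := by
            refine hfc _ ?_
            show 0 < (d₀ s a + (0 : S → ℝ) s) / dD s a
            simp only [Pi.zero_apply, add_zero]
            exact div_pos (h ▸ ha0 s) (hdD s a)
          exact ContinuousAt.mul continuousAt_const
            (ContinuousAt.comp (f := fun x : S → ℝ => (d₀ s a + x s) / dD s a)
              (x := 0) houter hinner)
        · simp only [if_neg h, add_zero]
          exact continuousAt_const
      have hsum : ∀ s, ContinuousAt (fun x : S → ℝ => ∑ a, dD s a * f (pd x s a / dD s a)) 0 := by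
        intro s
        exact tendsto_finset_sum _ fun a _ => hterm s a
      exact tendsto_finset_sum _ fun s _ => hsum s
  -- eventual goodness of the perturbation near 0
  have hpd0 : pd 0 = d₀ := by funext s a; simp [hpd]
  have hev1 : ∀ᶠ x : (S → ℝ) in 𝓝 0, Jf α f dD rhat d₀ - 1 < Jf α f dD rhat (pd x) := by
    have hp : ∀ᶠ y in 𝓝 (Jf α f dD rhat (pd 0)), Jf α f dD rhat d₀ - 1 < y :=
      eventually_gt_nhds (by rw [hpd0]; linarith)
    exact hGc.eventually hp
  have hev2 : ∀ᶠ x : (S → ℝ) in 𝓝 0, ∀ s a, 0 ≤ pd x s a := by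
    have hall : ∀ᶠ x : (S → ℝ) in 𝓝 0, ∀ s, -(d₀ s (a0 s)) < x s := by
      refine Filter.eventually_all.2 fun s => ?_
      exact ((continuous_apply s).tendsto (0 : S → ℝ)).eventually
        (eventually_gt_nhds (neg_lt_zero.2 (ha0 s)))
    refine hall.mono fun x hx s a => ?_
    simp only [hpd]
    by_cases h : a = a0 s
    · rw [if_pos h, h]
      have := hx s
      have := ha0 s
      linarith
    · rw [if_neg h, add_zero]
      exact hd₀.1 s a
  have hcomp : ∀ᶠ b : (S → ℝ) in 𝓝 0,
      (∀ s a, 0 ≤ pd (e.symm b) s a) ∧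
        Jf α f dD rhat d₀ - 1 < Jf α f dD rhat (pd (e.symm b)) := by
    have ht : Filter.Tendsto (fun b : S → ℝ => (e.symm b : S → ℝ)) (𝓝 0) (𝓝 0) := by
      have h := hecont.tendsto (0 : S → ℝ)
      simpa using h
    exact ht.eventually (hev2.and hev1)
  obtain ⟨ε, hε, hball⟩ := Metric.eventually_nhds_iff.1 hcomp
  -- the ball around (0, J d₀ - 2) is inside Cset
  rw [mem_interior]
  refine ⟨Metric.ball ((0 : S → ℝ), Jf α f dD rhat d₀ - 2) (min ε 1), ?_,
    Metric.isOpen_ball, Metric.mem_ball_self (lt_min hε one_pos)⟩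
  rintro ⟨b, u⟩ hmem
  rw [Metric.mem_ball, Prod.dist_eq] at hmem
  have hb : dist b (0 : S → ℝ) < ε :=
    lt_of_le_of_lt (le_max_left _ _) (hmem.trans_le (min_le_left _ _))
  have hu : |u - (Jf α f dD rhat d₀ - 2)| < 1 := by
    have h := lt_of_le_of_lt (le_max_right (dist b (0:S→ℝ)) _) (hmem.trans_le (min_le_right _ _))
    rwa [Real.dist_eq] at h
  obtain ⟨hnn, hJge⟩ := hball hb
  refine ⟨pd (e.symm b), hnn, ?_, ?_⟩
  · show b = resf γ μ0 T (pd (e.symm b))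
    rw [hres_pd, hesymm]
  · show u ≤ Jf α f dD rhat (pd (e.symm b))
    have h1 : u < Jf α f dD rhat d₀ - 1 := by
      rcases abs_lt.1 hu with ⟨_, h2⟩
      linarith
    linarith

end Interior
section Mult
variable {S A : Type*} [Fintype S] [Fintype A]

open Filter Topology

set_option maxHeartbeats 1000000 in
lemma exists_mult [DecidableEq S] [DecidableEq A]
    {γ α : ℝ} {f : ℝ → ℝ} {μ0 : S → ℝ} {T : S → A → S → ℝ} {dD rhat : S → A → ℝ}
    (hγ : γ ∈ Set.Ioo (0:ℝ) 1) (hα : 0 < α)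
    (hμ0sum : ∑ s, μ0 s = 1)
    (hT : ∀ s a s', 0 ≤ T s a s') (hTsum : ∀ s a, ∑ s', T s a s' = 1)
    (hf : ConvexOn ℝ (Set.Ici 0) f) (hdD : ∀ s a, 0 < dD s a)
    {d₀ : S → A → ℝ} (hd₀ : d₀ ∈ feas γ μ0 T) (hd₀p : ∀ s, 0 < ∑ a, d₀ s a) :
    ∃ V : S → ℝ, ∀ d : S → A → ℝ, (∀ s a, 0 ≤ d s a) →
      Jf α f dD rhat d + ∑ s, V s * resf γ μ0 T d s
        ≤ sSup (Jf α f dD rhat '' feas γ μ0 T) := by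
  set P := sSup (Jf α f dD rhat '' feas γ μ0 T) with hPdef
  have hbdd : BddAbove (Jf α f dD rhat '' feas γ μ0 T) :=
    Jf_bddAbove hγ.2 hα hμ0sum hTsum hf hdD
  have hconv : Convex ℝ (Cset γ α f μ0 T dD rhat) := Cset_convex hα hf hdD
  have hz₀ : ((0 : S → ℝ), Jf α f dD rhat d₀ - 2) ∈ interior (Cset γ α f μ0 T dD rhat) :=
    Cset_interior_point hγ hT hTsum hf hdD hd₀ hd₀p
  have hres0 : resf γ μ0 T d₀ = 0 := by
    funext s; exact sub_eq_zero.2 (hd₀.2 s).symm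
  -- the point (0, P) is not in the interior
  have hx₀ : ((0 : S → ℝ), P) ∉ interior (Cset γ α f μ0 T dD rhat) := by
    intro hmem
    rw [mem_interior_iff_mem_nhds, Metric.mem_nhds_iff] at hmem
    obtain ⟨ε, hε, hsub⟩ := hmem
    have hmem2 : ((0 : S → ℝ), P + ε / 2) ∈ Cset γ α f μ0 T dD rhat := by
      apply hsub
      rw [Metric.mem_ball, Prod.dist_eq]
      simp only [dist_self, Real.dist_eq]
      rw [show P + ε / 2 - P = ε / 2 by ring, abs_of_pos (by linarith)]
      rw [max_eq_right (by linarith)]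
      linarith
    obtain ⟨d, hdn, h1, h2⟩ := hmem2
    simp only at h1 h2
    have hdfeas : d ∈ feas γ μ0 T := by
      refine ⟨hdn, fun s => ?_⟩
      have := congrFun h1 s
      simp only [Pi.zero_apply] at this
      unfold resf at this
      linarith
    have hle : Jf α f dD rhat d ≤ P := le_csSup hbdd ⟨d, hdfeas, rfl⟩
    linarith
  obtain ⟨φ, hφ⟩ := geometric_hahn_banach_open_point hconv.interior isOpen_interior hx₀
  -- φ is ≤ on all of Cset
  have hφC : ∀ z ∈ Cset γ α f μ0 T dD rhat, φ z ≤ φ ((0 : S → ℝ), P) := by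
    intro z hz
    set z₀ : (S → ℝ) × ℝ := ((0 : S → ℝ), Jf α f dD rhat d₀ - 2) with hz₀def
    have hseg : ∀ t : ℝ, t ∈ Set.Ioc (0:ℝ) 1 →
        φ z + t * (φ z₀ - φ z) < φ ((0 : S → ℝ), P) := by
      intro t ht
      have hm := hconv.add_smul_sub_mem_interior hz hz₀ ht
      have h := hφ _ hm
      have heq : φ (z + t • (z₀ - z)) = φ z + t * (φ z₀ - φ z) := by
        rw [map_add, map_smul, map_sub, smul_eq_mul]
      rwa [heq] at h
    have htend : Filter.Tendsto (fun t : ℝ => φ z + t * (φ z₀ - φ z)) (𝓝[>] 0)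
        (𝓝 (φ z)) := by
      have hc : Continuous fun t : ℝ => φ z + t * (φ z₀ - φ z) := by continuity
      have h : Filter.Tendsto (fun t : ℝ => φ z + t * (φ z₀ - φ z)) (𝓝[>] 0)
          (𝓝 (φ z + 0 * (φ z₀ - φ z))) := (hc.tendsto 0).mono_left nhdsWithin_le_nhds
      simpa using h
    refine le_of_tendsto htend ?_
    filter_upwards [Ioc_mem_nhdsGT_of_mem (Set.mem_Ico.2 ⟨le_refl (0:ℝ), zero_lt_one⟩)]
      with t ht
    exact (hseg t ht).le
  set c := φ ((0 : S → ℝ), (1 : ℝ)) with hcdef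
  have hφsnd : ∀ u : ℝ, φ ((0 : S → ℝ), u) = u * c := by
    intro u
    have h : ((0 : S → ℝ), u) = u • ((0 : S → ℝ), (1 : ℝ)) := by
      rw [Prod.smul_mk, smul_zero, smul_eq_mul, mul_one]
    rw [h, map_smul, smul_eq_mul]
  have hJd₀mem : ∀ u : ℝ, u ≤ Jf α f dD rhat d₀ →
      ((0 : S → ℝ), u) ∈ Cset γ α f μ0 T dD rhat :=
    fun u hu => ⟨d₀, hd₀.1, hres0.symm, hu⟩
  have hcpos : 0 < c := by
    rcases lt_trichotomy c 0 with h | h | h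
    · exfalso
      set u := min (Jf α f dD rhat d₀) P - 1 with hudef
      have h1 := hφC _ (hJd₀mem u (by
        have := min_le_left (Jf α f dD rhat d₀) P; linarith))
      rw [hφsnd, hφsnd] at h1
      have h2 : u < P := by
        have := min_le_right (Jf α f dD rhat d₀) P; linarith
      nlinarith
    · exfalso
      have h1 := hφ _ hz₀
      rw [hφsnd, hφsnd] at h1
      rw [h] at h1
      simp at h1
    · exact h
  refine ⟨fun s => φ ((Pi.single s 1 : S → ℝ), 0) / c, ?_⟩
  intro d hdn
  have hmem : ((resf γ μ0 T d, Jf α f dD rhat d) : (S → ℝ) × ℝ)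
      ∈ Cset γ α f μ0 T dD rhat := ⟨d, hdn, rfl, le_refl _⟩
  have hle := hφC _ hmem
  rw [hφsnd] at hle
  have hdecomp : φ (resf γ μ0 T d, Jf α f dD rhat d)
      = (∑ s, resf γ μ0 T d s * φ ((Pi.single s 1 : S → ℝ), 0))
        + Jf α f dD rhat d * c := by
    have hrepr : ((resf γ μ0 T d, Jf α f dD rhat d) : (S → ℝ) × ℝ)
        = (∑ s, resf γ μ0 T d s • (((Pi.single s 1 : S → ℝ), (0:ℝ)) : (S → ℝ) × ℝ))
          + (Jf α f dD rhat d) • (((0 : S → ℝ), (1:ℝ)) : (S → ℝ) × ℝ) := by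
      refine Prod.ext ?_ ?_
      · simp [Prod.fst_sum, Prod.smul_mk, univ_sum_smul_single]
      · simp [Prod.snd_sum, Prod.smul_mk]
    rw [hrepr, map_add, map_sum, map_smul]
    simp only [map_smul, smul_eq_mul]
    rfl
  rw [hdecomp] at hle
  have hsum : (∑ s, (φ ((Pi.single s 1 : S → ℝ), 0) / c) * resf γ μ0 T d s) * c
      = ∑ s, resf γ μ0 T d s * φ ((Pi.single s 1 : S → ℝ), 0) := by
    rw [Finset.sum_mul]
    refine Finset.sum_congr rfl fun s _ => ?_
    field_simp
  have hgoal : (Jf α f dD rhat d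
      + ∑ s, (φ ((Pi.single s 1 : S → ℝ), 0) / c) * resf γ μ0 T d s) * c ≤ P * c := by
    calc (Jf α f dD rhat d
        + ∑ s, (φ ((Pi.single s 1 : S → ℝ), 0) / c) * resf γ μ0 T d s) * c
        = (∑ s, (φ ((Pi.single s 1 : S → ℝ), 0) / c) * resf γ μ0 T d s) * c
          + Jf α f dD rhat d * c := by ring
      _ = (∑ s, resf γ μ0 T d s * φ ((Pi.single s 1 : S → ℝ), 0))
          + Jf α f dD rhat d * c := by rw [hsum]
      _ ≤ P * c := hle
  exact le_of_mul_le_mul_right hgoal hcpos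
end Mult
/-- If there exists a nonnegative solution of the Bellman flow constraint with
strictly positive state marginals (Slater's condition), then strong duality holds
for `max_{d ≥ 0, flow} ∑ d·r̂ − α D_f(d‖d^D)`: its optimal value equals
`min_V max_{d ≥ 0}` of the Lagrangian. -/
theorem bellman_flow_strong_duality {S A : Type*} [Fintype S] [Fintype A]
    (γ α : ℝ) (hγ : γ ∈ Set.Ioo (0 : ℝ) 1) (hα : 0 < α)
    (μ0 : S → ℝ) (hμ0 : ∀ s, 0 ≤ μ0 s) (hμ0sum : ∑ s, μ0 s = 1)
    (T : S → A → S → ℝ) (hT : ∀ s a s', 0 ≤ T s a s')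
    (hTsum : ∀ s a, ∑ s', T s a s' = 1)
    (f : ℝ → ℝ) (hf : ConvexOn ℝ (Set.Ici 0) f)
    (dD : S → A → ℝ) (hdD : ∀ s a, 0 < dD s a)
    (rhat : S → A → ℝ)
    (hSlater : ∃ d : S → A → ℝ, (∀ s a, 0 ≤ d s a) ∧
      (∀ s, ∑ a, d s a =
        (1 - γ) * μ0 s + γ * ∑ sb, ∑ ab, T sb ab s * d sb ab) ∧
      (∀ s, 0 < ∑ a, d s a)) :
    sSup ((fun d : S → A → ℝ =>
        ((∑ s, ∑ a, d s a * rhat s a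
          - α * ∑ s, ∑ a, dD s a * f (d s a / dD s a) : ℝ) : EReal)) ''
      {d : S → A → ℝ | (∀ s a, 0 ≤ d s a) ∧
        ∀ s, ∑ a, d s a =
          (1 - γ) * μ0 s + γ * ∑ sb, ∑ ab, T sb ab s * d sb ab})
    = ⨅ V : S → ℝ, ⨆ d : {d : S → A → ℝ // ∀ s a, 0 ≤ d s a},
        ((∑ s, ∑ a, (d : S → A → ℝ) s a * rhat s a
          - α * ∑ s, ∑ a, dD s a * f ((d : S → A → ℝ) s a / dD s a)
          + ∑ s, V s * ((1 - γ) * μ0 s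
              + γ * (∑ sb, ∑ ab, T sb ab s * (d : S → A → ℝ) sb ab)
              - ∑ a, (d : S → A → ℝ) s a) : ℝ) : EReal) := by
  classical
  obtain ⟨d₀, hd₀n, hd₀c, hd₀p⟩ := hSlater
  have hd₀feas : d₀ ∈ feas γ μ0 T := ⟨hd₀n, hd₀c⟩
  have hne : (Jf α f dD rhat '' feas γ μ0 T).Nonempty := ⟨_, ⟨d₀, hd₀feas, rfl⟩⟩
  have hbdd : BddAbove (Jf α f dD rhat '' feas γ μ0 T) :=
    Jf_bddAbove hγ.2 hα hμ0sum hTsum hf hdD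
  obtain ⟨V, hV⟩ := exists_mult (rhat := rhat) hγ hα hμ0sum hT hTsum hf hdD hd₀feas hd₀p
  have hsup_coe : sSup (Real.toEReal '' (Jf α f dD rhat '' feas γ μ0 T))
      = ((sSup (Jf α f dD rhat '' feas γ μ0 T) : ℝ) : EReal) := ereal_sSup_coe hne hbdd
  have hLHS : sSup ((fun d : S → A → ℝ => ((Jf α f dD rhat d : ℝ) : EReal)) '' feas γ μ0 T)
      = ((sSup (Jf α f dD rhat '' feas γ μ0 T) : ℝ) : EReal) := by
    rw [← Set.image_image Real.toEReal (Jf α f dD rhat)]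
    exact hsup_coe
  have hRHS_le : (⨅ V' : S → ℝ, ⨆ d : {d : S → A → ℝ // ∀ s a, 0 ≤ d s a},
        ((Jf α f dD rhat d.1 + ∑ s, V' s * resf γ μ0 T d.1 s : ℝ) : EReal))
      ≤ ((sSup (Jf α f dD rhat '' feas γ μ0 T) : ℝ) : EReal) := by
    refine iInf_le_of_le V (iSup_le fun d => ?_)
    exact EReal.coe_le_coe_iff.2 (hV d.1 d.2)
  have hRHS_ge : ((sSup (Jf α f dD rhat '' feas γ μ0 T) : ℝ) : EReal)
      ≤ ⨅ V' : S → ℝ, ⨆ d : {d : S → A → ℝ // ∀ s a, 0 ≤ d s a},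
        ((Jf α f dD rhat d.1 + ∑ s, V' s * resf γ μ0 T d.1 s : ℝ) : EReal) := by
    refine le_iInf fun V' => ?_
    rw [← hsup_coe]
    refine sSup_le ?_
    rintro x ⟨y, ⟨d, hd, rfl⟩, rfl⟩
    have hres0 : ∀ s, resf γ μ0 T d s = 0 := fun s => sub_eq_zero.2 (hd.2 s).symm
    have heq : Jf α f dD rhat d = Jf α f dD rhat d + ∑ s, V' s * resf γ μ0 T d s := by
      simp [hres0]
    calc (Real.toEReal (Jf α f dD rhat d))
        = ((Jf α f dD rhat d + ∑ s, V' s * resf γ μ0 T d s : ℝ) : EReal) := by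
          exact congrArg Real.toEReal heq
      _ ≤ _ := le_iSup (fun d' : {d' : S → A → ℝ // ∀ s a, 0 ≤ d' s a} =>
          ((Jf α f dD rhat d'.1 + ∑ s, V' s * resf γ μ0 T d'.1 s : ℝ) : EReal)) ⟨d, hd.1⟩
  exact hLHS.trans (le_antisymm hRHS_ge hRHS_le)
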